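/- Under symmetric pricing (ρ_{1,k}^v = ρ_{1,k} > 0 and ρ_{2,k}^v = ρ_{2,k} ≥ 0 for all v), the pseudo-gradient of the DSM game is an affine map with symmetric positive semidefinite linear part: there exist a symmetric positive semidefinite matrix H and a vector f such that F(z) = H z + f for all stacked decisions z. -/

import Mathlib

open scoped RealInnerProductSpace InnerProductSpace

/-- Index type for one prosumer's decision vector over horizon `N`:
inputs `(e_k, s_k)` for `k ∈ {0,…,N-1}` and states `(ζ_k, q_k)` for `k ∈ {0,…,N}`. -/
abbrev DecIdx (N : ℕ) : Type := (Fin N × Fin 2) ⊕ (Fin (N + 1) × Fin 2)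

/-- Stacked decision space of all `M` prosumers, with the Euclidean inner product. -/
abbrev Dec (M N : ℕ) : Type := EuclideanSpace ℝ (Fin M × DecIdx N)

/-- All data of the DSM game over horizon `N` with `M` prosumers. -/
structure DSMData (M N : ℕ) where
  α : Fin M → ℝ
  β : Fin M → ℝ
  hα : ∀ v, α v ∈ Set.Icc (0 : ℝ) 1
  hβ : ∀ v, β v ∈ Set.Icc (0 : ℝ) 1
  eref : Fin M → Fin N → ℝ
  g : Fin M → Fin N → ℝ
  LP : Fin N → ℝ
  ρ1 : Fin M → Fin N → ℝ
  ρ2 : Fin M → Fin N → ℝ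
  γ1 : Fin M → Fin N → ℝ
  γ2 : Fin M → Fin N → ℝ
  hρ1 : ∀ v k, 0 < ρ1 v k
  hρ2 : ∀ v k, 0 ≤ ρ2 v k
  hγ1 : ∀ v k, 0 < γ1 v k
  hγ2 : ∀ v k, 0 < γ2 v k
  qbar : Fin M → ℝ
  ζlo : Fin (N + 1) → ℝ
  ζhi : Fin (N + 1) → ℝ
  elo : Fin M → ℝ
  ehi : Fin M → ℝ
  slo : Fin M → ℝ
  shi : Fin M → ℝ
  lbar : Fin M → ℝ
  Llo : Fin N → ℝ
  Lhi : Fin N → ℝ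

namespace DSM

variable {M N : ℕ}

/-- Energy consumption `e_k^v`. -/
def eIn (z : Dec M N) (v : Fin M) (k : Fin N) : ℝ := z (v, Sum.inl (k, 0))

/-- Battery charging input `s_k^v`. -/
def sIn (z : Dec M N) (v : Fin M) (k : Fin N) : ℝ := z (v, Sum.inl (k, 1))

/-- Energy-shift state `ζ_k^v`. -/
def ζSt (z : Dec M N) (v : Fin M) (k : Fin (N + 1)) : ℝ := z (v, Sum.inr (k, 0))

/-- State of charge `q_k^v`. -/
def qSt (z : Dec M N) (v : Fin M) (k : Fin (N + 1)) : ℝ := z (v, Sum.inr (k, 1))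

/-- Load of prosumer `v` at time `k`: `l_k^v = e_k^v + s_k^v - g_k^v`. -/
def load (D : DSMData M N) (z : Dec M N) (v : Fin M) (k : Fin N) : ℝ :=
  eIn z v k + sIn z v k - D.g v k

/-- Aggregate load `L_k = ∑_v l_k^v + L_k^P`. -/
def Lagg (D : DSMData M N) (z : Dec M N) (k : Fin N) : ℝ :=
  (∑ v, load D z v k) + D.LP k

/-- Cost of prosumer `v`:
`J^v(z) = ∑_k (ρ1_k^v L_k + ρ2_k^v) l_k^v + γ1_k^v (ζ_k^v)² + γ2_k^v (q_k^v)²`. -/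
def J (D : DSMData M N) (v : Fin M) (z : Dec M N) : ℝ :=
  ∑ k, ((D.ρ1 v k * Lagg D z k + D.ρ2 v k) * load D z v k
    + D.γ1 v k * (ζSt z v k.castSucc) ^ 2 + D.γ2 v k * (qSt z v k.castSucc) ^ 2)

/-- Pseudo-gradient `F(z) = (∇_{z^v} J^v(z))_v`: the coordinate of `F(z)` indexed by a
component of prosumer `v`'s decision is the corresponding partial derivative of `J^v`. -/
noncomputable def F (D : DSMData M N) (z : Dec M N) : Dec M N :=
  WithLp.toLp 2 (fun i => deriv (fun t => J D i.1 (WithLp.toLp 2 (Function.update z i t))) (z i))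

/-- Joint feasible set `Z(x₀, φ)`: dynamics with fixed initial states, local state/input
box constraints, load bounds and aggregate load bounds. -/
def Feas (D : DSMData M N) (x0 : Fin M → ℝ × ℝ) : Set (Dec M N) :=
  { z | (∀ v : Fin M,
      ζSt z v 0 = (x0 v).1 ∧ qSt z v 0 = (x0 v).2 ∧
      (∀ k : Fin N,
        ζSt z v k.succ = ζSt z v k.castSucc + (eIn z v k - D.eref v k) ∧
        qSt z v k.succ = D.α v * qSt z v k.castSucc + D.β v * sIn z v k) ∧
      (∀ k : Fin (N + 1),
        0 ≤ qSt z v k ∧ qSt z v k ≤ D.qbar v ∧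
        D.ζlo k ≤ ζSt z v k ∧ ζSt z v k ≤ D.ζhi k) ∧
      (∀ k : Fin N,
        D.elo v ≤ eIn z v k ∧ eIn z v k ≤ D.ehi v ∧
        D.slo v ≤ D.β v * sIn z v k ∧ D.β v * sIn z v k ≤ D.shi v ∧
        0 ≤ load D z v k ∧ load D z v k ≤ D.lbar v)) ∧
    (∀ k : Fin N, D.Llo k ≤ Lagg D z k ∧ Lagg D z k ≤ D.Lhi k) }

/-- Symmetric pricing: the price rates `ρ1` and `ρ2` are the same for all prosumers. -/
def SymmetricPricing (D : DSMData M N) : Prop :=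
  ∀ v w : Fin M, ∀ k : Fin N, D.ρ1 v k = D.ρ1 w k ∧ D.ρ2 v k = D.ρ2 w k

end DSM

open DSM

namespace DSMAux

open Matrix

variable {M N : ℕ}

lemma psd_outer {n : Type*} [Fintype n] (u : n → ℝ) : (vecMulVec u u).PosSemidef := by
  simpa using posSemidef_vecMulVec_self_star u

lemma psd_smul {n : Type*} [Fintype n] {A : Matrix n n ℝ} (hA : A.PosSemidef)
    {r : ℝ} (hr : 0 ≤ r) : (r • A).PosSemidef := by
  exact hA.smul hr

lemma psd_sum {n ι : Type*} [Fintype n] [DecidableEq n] {s : Finset ι}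
    {f : ι → Matrix n n ℝ} (h : ∀ i ∈ s, (f i).PosSemidef) :
    (∑ i ∈ s, f i).PosSemidef :=
  Finset.sum_induction f _ (fun _ _ ha hb => ha.add hb) Matrix.PosSemidef.zero h

def uk (M : ℕ) (k : Fin N) : Fin M × DecIdx N → ℝ :=
  fun i => match i.2 with
  | Sum.inl (k', _) => if k' = k then 1 else 0
  | Sum.inr _ => 0

def ukv (k : Fin N) (v : Fin M) : Fin M × DecIdx N → ℝ :=
  fun i => match i.2 with
  | Sum.inl (k', _) => if i.1 = v ∧ k' = k then 1 else 0
  | Sum.inr _ => 0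

def gam (D : DSMData M N) (v : Fin M) (j : Fin (N + 1)) (c : Fin 2) : ℝ :=
  if h : (j : ℕ) < N then (if c = 0 then D.γ1 v ⟨j, h⟩ else D.γ2 v ⟨j, h⟩) else 0

lemma gam_nonneg (D : DSMData M N) (v : Fin M) (j : Fin (N + 1)) (c : Fin 2) :
    0 ≤ gam D v j c := by
  unfold gam
  split
  · split
    · exact (D.hγ1 v _).le
    · exact (D.hγ2 v _).le
  · exact le_refl 0

def dvec (D : DSMData M N) : Fin M × DecIdx N → ℝ :=
  fun i => match i.2 with
  | Sum.inl _ => 0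
  | Sum.inr (j, c) => 2 * gam D i.1 j c

noncomputable def Hmat (D : DSMData M N) (r : Fin N → ℝ) :
    Matrix (Fin M × DecIdx N) (Fin M × DecIdx N) ℝ :=
  Matrix.diagonal (dvec D)
    + ∑ k, r k • (vecMulVec (uk M k) (uk M k) + ∑ v, vecMulVec (ukv k v) (ukv k v))

lemma Hmat_psd (D : DSMData M N) (r : Fin N → ℝ) (hr : ∀ k, 0 ≤ r k) :
    (Hmat D r).PosSemidef := by
  apply Matrix.PosSemidef.add
  · refine Matrix.posSemidef_diagonal_iff.2 fun i => ?_
    unfold dvec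
    rcases i with ⟨v, j | ⟨j, c⟩⟩
    · simp
    · simpa using mul_nonneg (by norm_num : (0:ℝ) ≤ 2) (gam_nonneg D v j c)
  · refine psd_sum fun k _ => psd_smul ?_ (hr k)
    exact (psd_outer _).add (psd_sum fun v _ => psd_outer _)

lemma Hmat_symm (D : DSMData M N) (r : Fin N → ℝ) (hr : ∀ k, 0 ≤ r k) :
    (Hmat D r).IsSymm := by
  have h := (Hmat_psd D r hr).1
  ext i j
  have := congrFun (congrFun h i) j
  simpa [Matrix.conjTranspose_apply, Matrix.transpose_apply] using this

lemma Hmat_ll (D : DSMData M N) (r : Fin N → ℝ) (v w : Fin M) (k k' : Fin N) (c c' : Fin 2) :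
    Hmat D r (v, Sum.inl (k, c)) (w, Sum.inl (k', c'))
      = if k' = k then r k * (1 + if w = v then 1 else 0) else 0 := by
  unfold Hmat uk ukv dvec
  simp only [Matrix.add_apply, Matrix.diagonal_apply, Matrix.sum_apply, Matrix.smul_apply,
    Matrix.vecMulVec_apply, smul_eq_mul]
  rw [ite_self, zero_add, Finset.sum_eq_single k]
  · rcases eq_or_ne k' k with rfl | hne
    · simp only [if_pos rfl, one_mul, mul_one, and_true]
      have : ∀ x1 : Fin M, (if v = x1 then (1:ℝ) else 0) * (if w = x1 then 1 else 0)
          = if x1 = v ∧ x1 = w then 1 else 0 := by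
        intro x1
        by_cases h1 : v = x1 <;> by_cases h2 : w = x1 <;>
          simp [h1, h2, eq_comm]
      rw [Finset.sum_congr rfl fun x1 _ => this x1]
      by_cases hwv : w = v
      · subst hwv
        simp
      · have hemp : ∀ x1 : Fin M, ¬(x1 = v ∧ x1 = w) := by
          rintro x1 ⟨rfl, rfl⟩
          exact hwv rfl
        simp [hwv, hemp]
    · simp [hne, Ne.symm hne]
  · intro b _ hb
    simp [Ne.symm hb]
  · simp

lemma Hmat_lr (D : DSMData M N) (r : Fin N → ℝ) (v w : Fin M) (p : Fin N × Fin 2)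
    (q : Fin (N + 1) × Fin 2) :
    Hmat D r (v, Sum.inl p) (w, Sum.inr q) = 0 := by
  unfold Hmat uk ukv dvec
  simp [Matrix.add_apply, Matrix.diagonal_apply, Matrix.sum_apply, Matrix.smul_apply,
    Matrix.vecMulVec_apply]

lemma Hmat_rl (D : DSMData M N) (r : Fin N → ℝ) (v w : Fin M) (q : Fin (N + 1) × Fin 2)
    (p : Fin N × Fin 2) :
    Hmat D r (v, Sum.inr q) (w, Sum.inl p) = 0 := by
  unfold Hmat uk ukv dvec
  simp [Matrix.add_apply, Matrix.diagonal_apply, Matrix.sum_apply, Matrix.smul_apply,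
    Matrix.vecMulVec_apply]

lemma Hmat_rr (D : DSMData M N) (r : Fin N → ℝ) (v w : Fin M) (j j' : Fin (N + 1))
    (c c' : Fin 2) :
    Hmat D r (v, Sum.inr (j, c)) (w, Sum.inr (j', c'))
      = if (v, j, c) = (w, j', c') then 2 * gam D v j c else 0 := by
  unfold Hmat uk ukv dvec
  simp [Matrix.add_apply, Matrix.diagonal_apply, Matrix.sum_apply, Matrix.smul_apply,
    Matrix.vecMulVec_apply, Prod.ext_iff]

end DSMAux

section DerivAux

variable {M N : ℕ}

lemma updCoord_hasDerivAt (z : Dec M N) (i j : Fin M × DecIdx N) :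
    HasDerivAt (fun t : ℝ => Function.update z i t j) (if j = i then 1 else 0) (z i) := by
  rcases eq_or_ne j i with rfl | h
  · have : (fun t : ℝ => Function.update z j t j) = fun t => t := by
      funext t
      exact Function.update_self j t z
    rw [this, if_pos rfl]
    exact hasDerivAt_id _
  · have : (fun t : ℝ => Function.update z i t j) = fun _ => z j := by
      funext t
      exact Function.update_of_ne h t z
    rw [this, if_neg h]
    exact hasDerivAt_const _ _

lemma hasDerivAt_J (D : DSMData M N) (w : Fin M) (i : Fin M × DecIdx N) (z : Dec M N) :
    HasDerivAt (fun t => J D w (WithLp.toLp 2 (Function.update z i t)))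
      (∑ k, (D.ρ1 w k * (∑ u, ((if ((u, Sum.inl (k, 0)) : Fin M × DecIdx N) = i then (1:ℝ) else 0)
              + (if ((u, Sum.inl (k, 1)) : Fin M × DecIdx N) = i then (1:ℝ) else 0)))
            * load D z w k
        + (D.ρ1 w k * Lagg D z k + D.ρ2 w k)
            * ((if ((w, Sum.inl (k, 0)) : Fin M × DecIdx N) = i then (1:ℝ) else 0)
              + (if ((w, Sum.inl (k, 1)) : Fin M × DecIdx N) = i then (1:ℝ) else 0))
        + D.γ1 w k * (2 * ζSt z w k.castSucc
            * (if ((w, Sum.inr (k.castSucc, 0)) : Fin M × DecIdx N) = i then (1:ℝ) else 0))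
        + D.γ2 w k * (2 * qSt z w k.castSucc
            * (if ((w, Sum.inr (k.castSucc, 1)) : Fin M × DecIdx N) = i then (1:ℝ) else 0))))
      (z i) := by
  have hupd : ∀ j, HasDerivAt (fun t : ℝ => Function.update z i t j)
      (if j = i then 1 else 0) (z i) := updCoord_hasDerivAt z i
  simp only [J, Lagg, load, eIn, sIn, ζSt, qSt, PiLp.toLp_apply]
  refine HasDerivAt.fun_sum fun k _ => ?_
  have hL : HasDerivAt
      (fun t => (∑ u, (Function.update z i t (u, Sum.inl (k, 0))
          + Function.update z i t (u, Sum.inl (k, 1)) - D.g u k)) + D.LP k)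
      (∑ u, ((if ((u, Sum.inl (k, 0)) : Fin M × DecIdx N) = i then (1:ℝ) else 0)
          + (if ((u, Sum.inl (k, 1)) : Fin M × DecIdx N) = i then (1:ℝ) else 0))) (z i) :=
    (HasDerivAt.fun_sum fun u _ => ((hupd _).add (hupd _)).sub_const _).add_const _
  have hl : HasDerivAt
      (fun t => Function.update z i t (w, Sum.inl (k, 0))
          + Function.update z i t (w, Sum.inl (k, 1)) - D.g w k)
      ((if ((w, Sum.inl (k, 0)) : Fin M × DecIdx N) = i then (1:ℝ) else 0)
          + (if ((w, Sum.inl (k, 1)) : Fin M × DecIdx N) = i then (1:ℝ) else 0)) (z i) :=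
    ((hupd _).add (hupd _)).sub_const _
  have h1 := ((hL.const_mul (D.ρ1 w k)).add_const (D.ρ2 w k)).mul hl
  have h2 := ((hupd (w, Sum.inr (k.castSucc, 0))).pow 2).const_mul (D.γ1 w k)
  have h3 := ((hupd (w, Sum.inr (k.castSucc, 1))).pow 2).const_mul (D.γ2 w k)
  have h := (h1.add h2).add h3
  convert h using 1
  · rfl
  simp only [Function.update_eq_self, pow_one, Nat.cast_ofNat]
  ring

lemma F_apply (D : DSMData M N) (z : Dec M N) (i : Fin M × DecIdx N) :
    F D z i
      = ∑ k, (D.ρ1 i.1 k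
            * (∑ u, ((if ((u, Sum.inl (k, 0)) : Fin M × DecIdx N) = i then (1:ℝ) else 0)
              + (if ((u, Sum.inl (k, 1)) : Fin M × DecIdx N) = i then (1:ℝ) else 0)))
            * load D z i.1 k
        + (D.ρ1 i.1 k * Lagg D z k + D.ρ2 i.1 k)
            * ((if ((i.1, Sum.inl (k, 0)) : Fin M × DecIdx N) = i then (1:ℝ) else 0)
              + (if ((i.1, Sum.inl (k, 1)) : Fin M × DecIdx N) = i then (1:ℝ) else 0))
        + D.γ1 i.1 k * (2 * ζSt z i.1 k.castSucc
            * (if ((i.1, Sum.inr (k.castSucc, 0)) : Fin M × DecIdx N) = i then (1:ℝ) else 0))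
        + D.γ2 i.1 k * (2 * qSt z i.1 k.castSucc
            * (if ((i.1, Sum.inr (k.castSucc, 1)) : Fin M × DecIdx N) = i then (1:ℝ) else 0))) :=
  (hasDerivAt_J D i.1 i z).deriv

end DerivAux


/-- Under symmetric pricing, the pseudo-gradient of the DSM game is an
affine map with symmetric positive semidefinite linear part: `F(z) = H z + f` with
`H` symmetric positive semidefinite. -/
theorem pseudogradient_affine_psd
    {M N : ℕ} (hM : 1 ≤ M) (hN : 1 ≤ N) (D : DSMData M N)
    (hsym : SymmetricPricing D) :
    ∃ H : Matrix (Fin M × DecIdx N) (Fin M × DecIdx N) ℝ,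
      H.IsSymm ∧ H.PosSemidef ∧
      ∃ f : Dec M N, ∀ z : Dec M N,
        F D z = (WithLp.toLp 2 (fun i => (∑ j, H i j * z j) + f i) : Dec M N) := by
  classical
  have hr : ∀ k, 0 ≤ D.ρ1 ⟨0, hM⟩ k := fun k => (D.hρ1 _ k).le
  refine ⟨DSMAux.Hmat D (fun k => D.ρ1 ⟨0, hM⟩ k),
    DSMAux.Hmat_symm D _ hr, DSMAux.Hmat_psd D _ hr,
    (WithLp.toLp 2 fun (i : Fin M × DecIdx N) => Sum.elim
      (fun p : Fin N × Fin 2 =>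
        D.ρ1 ⟨0, hM⟩ p.1 * (D.LP p.1 - (∑ u, D.g u p.1) - D.g i.1 p.1) + D.ρ2 ⟨0, hM⟩ p.1)
      (fun _ => (0:ℝ)) i.2 : Dec M N), ?_⟩
  intro z
  ext i
  obtain ⟨v, idx⟩ := i
  rw [F_apply, PiLp.toLp_apply, PiLp.toLp_apply]
  simp only [Fintype.sum_prod_type, Fintype.sum_sum_type]
  rcases idx with ⟨k0, c0⟩ | ⟨j0, c0⟩
  · simp only [DSMAux.Hmat_ll, DSMAux.Hmat_lr, Prod.mk.injEq, Sum.inl.injEq, Sum.inr.injEq,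
      reduceCtorEq, if_false, and_false, false_and, mul_zero, zero_mul, add_zero, Finset.sum_const_zero,
      Sum.elim_inl]
    fin_cases c0 <;>
    · simp only [Fin.isValue, and_true, and_false, if_false, if_true, add_zero, zero_add,
        Finset.sum_const_zero, mul_zero, mul_one, ite_and, Finset.sum_ite_eq', Finset.mem_univ,
        if_true, mul_ite, Fin.zero_eta, Fin.mk_one, show ((0:Fin 2) = 1) = False by simp,
        show ((1:Fin 2) = 0) = False by simp, ite_false, ite_true]
      rw [Finset.sum_add_distrib]
      simp only [ite_mul, zero_mul, Finset.sum_ite_eq', Finset.mem_univ, if_true,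
        mul_ite, mul_zero, mul_one, Fin.sum_univ_two, Finset.sum_add_distrib]
      rw [(hsym v ⟨0, hM⟩ k0).1, (hsym v ⟨0, hM⟩ k0).2]
      simp only [DSM.load, DSM.Lagg, DSM.eIn, DSM.sIn, mul_add, add_mul, one_mul,
        Finset.sum_add_distrib, Finset.sum_sub_distrib, Finset.mul_sum, mul_sub,
        mul_ite, mul_one, mul_zero, ite_mul, zero_mul, Finset.sum_ite_eq',
        Finset.mem_univ, if_true]
      ring
  · simp only [DSMAux.Hmat_rl, DSMAux.Hmat_rr, Prod.mk.injEq, Sum.inl.injEq, Sum.inr.injEq,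
      reduceCtorEq, if_false, and_false, false_and, mul_zero, zero_mul, add_zero, zero_add,
      Finset.sum_const_zero, Sum.elim_inr, Fintype.sum_prod_type, Fin.sum_univ_two]
    by_cases hj : (j0 : ℕ) < N
    · have hcast : ∀ x : Fin N, (x.castSucc = j0) ↔ (x = ⟨(j0 : ℕ), hj⟩) := by
        intro x
        constructor
        · intro h
          ext
          simpa using congrArg Fin.val h
        · rintro rfl
          ext
          simp
      have hcs : (Fin.castSucc ⟨(j0 : ℕ), hj⟩ : Fin (N + 1)) = j0 := by
        ext
        simp
      fin_cases c0 <;>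
        simp [hcast, hcs, mul_ite, ite_mul, zero_mul, mul_zero, ite_and,
          Finset.sum_ite_eq, Finset.sum_ite_eq', DSMAux.gam, hj, DSM.ζSt, DSM.qSt] <;>
        ring
    · have hfalse : ∀ x : Fin N, ¬(x.castSucc = j0) := by
        intro x h
        apply hj
        rw [← h]
        simp
      fin_cases c0 <;>
        simp [hfalse, DSMAux.gam, hj]
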